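/- With μ, μ_f as above, μ = μ_f holds if and only if each row of P contains exactly one nonzero entry and these entries lie in pairwise distinct columns. -/

import Mathlib

open Finset

private lemma sym_split {m : ℕ} (F : Fin m → Fin m → ℝ) (hsym : ∀ i j, F i j = F j i) :
    ∑ i, ∑ j, F i j
      = 2 * (∑ i, ∑ j ∈ Finset.univ.filter (fun j => i < j), F i j) + ∑ i, F i i := by
  have key : ∀ i j : Fin m, F i j =
      (if i < j then F i j else 0) + (if j < i then F i j else 0)
        + (if i = j then F i j else 0) := by
    intro i j
    rcases lt_trichotomy i j with h | h | h
    · simp [h, h.ne, lt_asymm h]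
    · subst h; simp
    · simp [h, h.ne', lt_asymm h]
  have hB : (∑ i : Fin m, ∑ j : Fin m, (if j < i then F i j else 0))
      = ∑ i : Fin m, ∑ j : Fin m, (if i < j then F i j else 0) := by
    rw [Finset.sum_comm]
    refine Finset.sum_congr rfl fun i _ => Finset.sum_congr rfl fun j _ => ?_
    rw [hsym]
  calc ∑ i, ∑ j, F i j
      = ∑ i : Fin m, ∑ j : Fin m, ((if i < j then F i j else 0)
          + (if j < i then F i j else 0) + (if i = j then F i j else 0)) := by
        refine Finset.sum_congr rfl fun i _ => Finset.sum_congr rfl fun j _ => key i j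
    _ = (∑ i : Fin m, ∑ j : Fin m, (if i < j then F i j else 0))
        + (∑ i : Fin m, ∑ j : Fin m, (if j < i then F i j else 0))
        + ∑ i : Fin m, ∑ j : Fin m, (if i = j then F i j else 0) := by
        simp [Finset.sum_add_distrib]
    _ = 2 * (∑ i, ∑ j ∈ Finset.univ.filter (fun j => i < j), F i j) + ∑ i, F i i := by
        rw [hB]
        have h1 : ∀ i : Fin m, (∑ j : Fin m, (if i < j then F i j else 0))
            = ∑ j ∈ Finset.univ.filter (fun j => i < j), F i j := by
          intro i; rw [Finset.sum_filter]
        have h2 : ∀ i : Fin m, (∑ j : Fin m, (if i = j then F i j else 0)) = F i i := by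
          intro i; simp
        simp only [h1, h2]; ring

private lemma lagrange {m : ℕ} (u v : Fin m → ℝ) :
    ∑ i, ∑ j ∈ Finset.univ.filter (fun j => i < j), (u i * v j - u j * v i) ^ 2
      = (∑ i, u i ^ 2) * (∑ i, v i ^ 2) - (∑ i, u i * v i) ^ 2 := by
  have h := sym_split (fun i j => (u i * v j - u j * v i) ^ 2) (by intro i j; ring)
  have hdiag : (∑ i : Fin m, (u i * v i - u i * v i) ^ 2) = 0 := by simp
  have full : (∑ i : Fin m, ∑ j : Fin m, (u i * v j - u j * v i) ^ 2)
      = 2 * ((∑ i, u i ^ 2) * (∑ i, v i ^ 2) - (∑ i, u i * v i) ^ 2) := by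
    have e : ∀ i j : Fin m, (u i * v j - u j * v i) ^ 2
        = u i ^ 2 * v j ^ 2 + v i ^ 2 * u j ^ 2 - 2 * ((u i * v i) * (u j * v j)) := by
      intro i j; ring
    simp_rw [e, Finset.sum_sub_distrib, Finset.sum_add_distrib, ← Finset.mul_sum,
      ← Finset.sum_mul]
    ring
  rw [hdiag] at h
  linarith

private lemma sq_sum {m : ℕ} (u : Fin m → ℝ) :
    (∑ i, u i) ^ 2 = ∑ i, u i ^ 2
      + 2 * ∑ i, ∑ j ∈ Finset.univ.filter (fun j => i < j), u i * u j := by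
  have h := sym_split (fun i j => u i * u j) (fun i j => mul_comm _ _)
  have h2 : (∑ i, u i) ^ 2 = ∑ i : Fin m, ∑ j : Fin m, u i * u j := by
    rw [sq, Finset.sum_mul_sum]
  have h3 : (∑ i : Fin m, u i * u i) = ∑ i, u i ^ 2 := by
    refine Finset.sum_congr rfl fun i _ => (sq (u i)).symm
  rw [h2, h, h3]
  ring

theorem stmt_12 (n m : ℕ) (hn : 2 ≤ n) (hnm : n ≤ m)
    (P : Matrix (Fin n) (Fin m) ℝ) (hP : ∀ i j, 0 ≤ P i j)
    (s : Fin n → ℝ) (hs : ∀ p, s p = ∑ j, P p j) (hspos : ∀ p, 0 < s p)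
    (μ μf : ℝ)
    (hμ : μ = ∑ p : Fin n, ∑ q ∈ Finset.univ.filter (fun q => p < q),
      ∑ i : Fin m, ∑ j ∈ Finset.univ.filter (fun j => i < j),
        (P p i * P q j - P p j * P q i) ^ 2)
    (hμf : μf = ∑ p : Fin n, ∑ q ∈ Finset.univ.filter (fun q => p < q),
        (s p) ^ 2 * (s q) ^ 2) :
    μ = μf ↔ ∃ c : Fin n → Fin m, Function.Injective c ∧
      (∀ p, P p (c p) ≠ 0) ∧ (∀ p j, j ≠ c p → P p j = 0) := by
  set Q : Fin n → ℝ := fun p => ∑ i, P p i ^ 2 with hQdef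
  set I : Fin n → Fin n → ℝ := fun p q => ∑ i, P p i * P q i with hIdef
  have hA : ∀ p q : Fin n,
      (∑ i : Fin m, ∑ j ∈ Finset.univ.filter (fun j => i < j),
        (P p i * P q j - P p j * P q i) ^ 2) = Q p * Q q - I p q ^ 2 :=
    fun p q => lagrange (P p) (P q)
  have hQ0 : ∀ p, 0 ≤ Q p := fun p => Finset.sum_nonneg fun i _ => sq_nonneg _
  have hX0 : ∀ p, 0 ≤ ∑ i, ∑ j ∈ Finset.univ.filter (fun j => i < j), P p i * P p j :=
    fun p => Finset.sum_nonneg fun i _ => Finset.sum_nonneg fun j _ =>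
      mul_nonneg (hP p i) (hP p j)
  have hQle : ∀ p, Q p ≤ s p ^ 2 := by
    intro p
    have := sq_sum (P p)
    rw [← hs p] at this
    have := hX0 p
    linarith [sq_sum (P p)]
  constructor
  · intro hμeq
    -- each pair term is extremal
    have hpair : ∀ p q : Fin n, p < q → Q p * Q q - I p q ^ 2 = s p ^ 2 * s q ^ 2 := by
      have hdiff : (∑ p : Fin n, ∑ q ∈ Finset.univ.filter (fun q => p < q),
          (s p ^ 2 * s q ^ 2 - (Q p * Q q - I p q ^ 2))) = 0 := by
        simp_rw [Finset.sum_sub_distrib]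
        simp_rw [hA, Finset.sum_sub_distrib] at hμ
        linarith
      have hterm0 := (Finset.sum_eq_zero_iff_of_nonneg (fun p _ =>
          Finset.sum_nonneg fun q _ => by
            nlinarith [hQle p, hQle q, hQ0 p, hQ0 q, sq_nonneg (I p q), sq_nonneg (s p),
              sq_nonneg (s q), mul_le_mul_of_nonneg_right (hQle p) (hQ0 q),
              mul_le_mul_of_nonneg_left (hQle q) (sq_nonneg (s p))])).mp hdiff
      intro p q hpq
      have h2 := hterm0 p (Finset.mem_univ p)
      rw [Finset.sum_eq_zero_iff_of_nonneg] at h2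
      · have := h2 q (by simp [hpq])
        linarith
      · intro q' _
        nlinarith [hQle p, hQle q', hQ0 p, hQ0 q', sq_nonneg (I p q'), sq_nonneg (s p),
          sq_nonneg (s q'), mul_le_mul_of_nonneg_right (hQle p) (hQ0 q'),
          mul_le_mul_of_nonneg_left (hQle q') (sq_nonneg (s p))]
    -- extract the three equalities for each pair
    have hkey : ∀ p q : Fin n, p < q → Q p = s p ^ 2 ∧ Q q = s q ^ 2 ∧ I p q = 0 := by
      intro p q hpq
      have h := hpair p q hpq
      have h1 : Q p ≤ s p ^ 2 := hQle p
      have h2 : Q q ≤ s q ^ 2 := hQle q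
      have hsp := hspos p; have hsq := hspos q
      have e1 : Q p * Q q ≤ s p ^ 2 * Q q := mul_le_mul_of_nonneg_right h1 (hQ0 q)
      have e2 : s p ^ 2 * Q q ≤ s p ^ 2 * s q ^ 2 := mul_le_mul_of_nonneg_left h2 (sq_nonneg _)
      have e3 : Q p * Q q ≤ Q p * s q ^ 2 := mul_le_mul_of_nonneg_left h2 (hQ0 p)
      have e4 : Q p * s q ^ 2 ≤ s p ^ 2 * s q ^ 2 := mul_le_mul_of_nonneg_right h1 (sq_nonneg _)
      have hsp2 : 0 < s p ^ 2 := pow_pos hsp 2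
      have hsq2 : 0 < s q ^ 2 := pow_pos hsq 2
      have hQp : Q p = s p ^ 2 := by nlinarith [sq_nonneg (I p q), hQ0 p, hQ0 q]
      have hQq : Q q = s q ^ 2 := by nlinarith [sq_nonneg (I p q), hQ0 p, hQ0 q]
      have hI2 : I p q ^ 2 = 0 := by nlinarith
      exact ⟨hQp, hQq, pow_eq_zero_iff (two_ne_zero) |>.mp hI2⟩
    -- every row satisfies Q p = s p ^ 2
    have hQall : ∀ p, Q p = s p ^ 2 := by
      intro p
      obtain ⟨q, hq⟩ := Fintype.exists_ne_of_one_lt_card (by simp; omega) p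
      rcases lt_or_gt_of_ne hq.symm with h | h
      · exact (hkey p q h).1
      · exact (hkey q p h).2.1
    -- each row has a unique nonzero column
    have hrow : ∀ p, ∃ i, P p i ≠ 0 ∧ ∀ j, j ≠ i → P p j = 0 := by
      intro p
      have hX : (∑ i, ∑ j ∈ Finset.univ.filter (fun j => i < j), P p i * P p j) = 0 := by
        have := sq_sum (P p)
        rw [← hs p] at this
        have := hQall p
        linarith [sq_sum (P p)]
      have hzero : ∀ i j : Fin m, i < j → P p i * P p j = 0 := by
        intro i j hij
        rw [Finset.sum_eq_zero_iff_of_nonneg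
          (fun i _ => Finset.sum_nonneg fun j _ => mul_nonneg (hP p i) (hP p j))] at hX
        have := hX i (Finset.mem_univ i)
        rw [Finset.sum_eq_zero_iff_of_nonneg
          (fun j _ => mul_nonneg (hP p i) (hP p j))] at this
        exact this j (by simp [hij])
      have hzero' : ∀ i j : Fin m, i ≠ j → P p i * P p j = 0 := by
        intro i j hij
        rcases lt_or_gt_of_ne hij with h | h
        · exact hzero i j h
        · rw [mul_comm]; exact hzero j i h
      have hex : ∃ i, P p i ≠ 0 := by
        by_contra hcon
        push_neg at hcon
        have : s p = 0 := by rw [hs p]; exact Finset.sum_eq_zero fun j _ => hcon j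
        linarith [hspos p]
      obtain ⟨i, hi⟩ := hex
      refine ⟨i, hi, fun j hj => ?_⟩
      have := hzero' j i hj
      rcases mul_eq_zero.mp this with h | h
      · exact h
      · exact absurd h hi
    choose c hc1 hc2 using hrow
    refine ⟨c, ?_, hc1, hc2⟩
    intro p q hpq
    by_contra hne
    have hI0 : ∀ p q : Fin n, p < q → I p q = 0 := fun p q h => (hkey p q h).2.2
    have key : ∀ p q : Fin n, p ≠ q → P p (c p) * P q (c p) = 0 := by
      intro p q hpq'
      have hIz : I p q = 0 ∨ I q p = 0 := by
        rcases lt_or_gt_of_ne hpq' with h | h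
        · exact Or.inl (hI0 p q h)
        · exact Or.inr (hI0 q p h)
      have hIsymm : I q p = I p q := by
        simp only [hIdef]
        exact Finset.sum_congr rfl fun i _ => mul_comm _ _
      have hIz' : I p q = 0 := by rcases hIz with h | h; exact h; rw [← hIsymm]; exact h
      rw [Finset.sum_eq_zero_iff_of_nonneg
        (fun i _ => mul_nonneg (hP p i) (hP q i))] at hIz'
      exact hIz' (c p) (Finset.mem_univ _)
    have := key p q hne
    rw [hpq] at this
    rcases mul_eq_zero.mp this with h | h
    · exact hc1 p (hpq ▸ h)
    · exact hc1 q h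
  · rintro ⟨c, hcinj, hcnz, hczero⟩
    have hsrow : ∀ p, s p = P p (c p) := by
      intro p
      rw [hs p]
      exact Finset.sum_eq_single (c p) (fun j _ hj => hczero p j hj)
        (fun h => absurd (Finset.mem_univ _) h)
    have hQrow : ∀ p, Q p = s p ^ 2 := by
      intro p
      rw [hsrow p]
      simp only [hQdef]
      exact Finset.sum_eq_single (c p) (fun j _ hj => by rw [hczero p j hj]; ring)
        (fun h => absurd (Finset.mem_univ _) h)
    have hIrow : ∀ p q : Fin n, p ≠ q → I p q = 0 := by
      intro p q hpq
      refine Finset.sum_eq_zero fun i _ => ?_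
      by_cases hi : i = c p
      · have : i ≠ c q := by
          rw [hi]; intro h; exact hpq (hcinj h)
        rw [hczero q i this]; ring
      · rw [hczero p i hi]; ring
    rw [hμ, hμf]
    refine Finset.sum_congr rfl fun p _ => Finset.sum_congr rfl fun q hq => ?_
    rw [hA p q, hQrow p, hQrow q, hIrow p q (Finset.mem_filter.mp hq).2.ne]
    ring
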